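/- Let X be a real Banach space that is uniformly convex and uniformly smooth, both moduli of power type 2 (δ_X(ε) ≥ M·ε², ρ_X(τ) ≤ K·τ² for some M, K > 0), and let Ω = X ∖ {0} with ℓ_k(γ) = ∫ ‖γ′(t)‖/‖γ(t)‖ dt. Then there exists R > 0 such that if γ₁, γ₂ : [0, t₁] → Ω are rectifiable, almost everywhere differentiable paths with the same starting point γ₁(0) = γ₂(0), unit speed ‖γ₁′(t)‖ = ‖γ₂′(t)‖ = 1 for a.e. t, images of γ₁, γ₂ and (γ₁+γ₂)/2 contained in {z : 1 ≤ ‖z‖ ≤ 2}, and equal quasihyperbolic lengths ℓ_k(γ₁) = ℓ_k(γ₂) ≤ R, then either (ℓ_k(γ₁) + ℓ_k(γ₂))/2 > ℓ_k((γ₁+γ₂)/2) or γ₁ = γ₂. -/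

import Mathlib

/-- The modulus of convexity of a normed space `X`:
`δ_X(ε) = inf{1 − ‖x+y‖/2 : ‖x‖ = ‖y‖ = 1, ‖x − y‖ = ε}`. -/
noncomputable def modulusConvexity (X : Type*) [NormedAddCommGroup X] (ε : ℝ) : ℝ :=
  sInf {c | ∃ x y : X, ‖x‖ = 1 ∧ ‖y‖ = 1 ∧ ‖x - y‖ = ε ∧ c = 1 - ‖x + y‖ / 2}

/-- The modulus of smoothness of a normed space `X`:
`ρ_X(τ) = sup{(‖x+y‖ + ‖x−y‖)/2 − 1 : ‖x‖ = 1, ‖y‖ = τ}`. -/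
noncomputable def modulusSmoothness (X : Type*) [NormedAddCommGroup X] (τ : ℝ) : ℝ :=
  sSup {c | ∃ x y : X, ‖x‖ = 1 ∧ ‖y‖ = τ ∧ c = (‖x + y‖ + ‖x - y‖) / 2 - 1}

/-- The quasihyperbolic length on the punctured space `Ω = X ∖ {0}` (where `d(x) = ‖x‖`)
of a path `γ` over `[a,b]`: `ℓ_k(γ; a, b) = ∫ₐᵇ ‖γ′(t)‖/‖γ(t)‖ dt`. -/
noncomputable def qhLengthPunct {X : Type*} [NormedAddCommGroup X] [NormedSpace ℝ X]
    (γ : ℝ → X) (a b : ℝ) : ℝ :=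
  ∫ t in a..b, ‖deriv γ t‖ / ‖γ t‖

open MeasureTheory Set Filter Topology intervalIntegral

lemma lip_ftc {X : Type*} [NormedAddCommGroup X] [NormedSpace ℝ X] [CompleteSpace X]
    {γ : ℝ → X} {b : ℝ} {L : NNReal} (hlip : LipschitzOnWith L γ (Set.Icc 0 b))
    (hdiff : ∀ᵐ t ∂(volume.restrict (Set.Icc 0 b)), DifferentiableAt ℝ γ t)
    {v : ℝ} (hv0 : 0 < v) (hvb : v ≤ b) :
    ∫ t in (0:ℝ)..v, deriv γ t = γ v - γ 0 := by
  have hcont : ContinuousOn γ (Icc 0 b) := hlip.continuousOn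
  have hb0 : (0:ℝ) ≤ b := hv0.le.trans hvb
  set δ : ℕ → ℝ := fun n => v / (n + 1) with hδdef
  have hδpos : ∀ n, 0 < δ n := fun n => by positivity
  have hδle : ∀ n, δ n ≤ v := fun n => by
    apply div_le_self hv0.le
    have : (0:ℝ) ≤ (n:ℝ) := Nat.cast_nonneg n
    linarith
  have hδto : Tendsto δ atTop (𝓝 0) := by
    have h := tendsto_one_div_add_atTop_nhds_zero_nat.const_mul v
    simpa [hδdef, div_eq_mul_inv, one_div, mul_comm] using h
  have hII : ∀ {a c : ℝ}, 0 ≤ a → a ≤ c → c ≤ b → IntervalIntegrable γ volume a c := by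
    intro a c ha hac hcb
    apply (hcont.mono ?_).intervalIntegrable
    rw [uIcc_of_le hac]
    exact Icc_subset_Icc ha hcb
  set g : ℕ → ℝ → X := fun n t =>
    (Set.Icc 0 (v - δ n)).indicator (fun t => (δ n)⁻¹ • (γ (t + δ n) - γ t)) t with hgdef
  set F : ℝ → X := (Set.Ioo 0 v).indicator (deriv γ) with hFdef
  have hshiftcont : ∀ n, ContinuousOn (fun t => γ (t + δ n)) (Icc 0 (v - δ n)) := by
    intro n
    apply hcont.comp (by fun_prop)
    intro t ht
    constructor
    · have := ht.1; have := (hδpos n).le; dsimp only; linarith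
    · have := ht.2; dsimp only; linarith
  -- Step A : value of ∫ g n
  have stepA : ∀ n, ∫ t, g n t =
      (δ n)⁻¹ • ((∫ t in (v - δ n)..v, γ t) - ∫ t in (0:ℝ)..(δ n), γ t) := by
    intro n
    have h1 : 0 ≤ v - δ n := sub_nonneg.2 (hδle n)
    have I1 : IntervalIntegrable (fun t => γ (t + δ n)) volume 0 (v - δ n) := by
      apply (hshiftcont n).mono ?_ |>.intervalIntegrable
      · rw [uIcc_of_le h1]
    have I2 : IntervalIntegrable γ volume 0 (v - δ n) := hII le_rfl h1 (by have := (hδpos n).le; linarith)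
    rw [hgdef]
    rw [MeasureTheory.integral_indicator measurableSet_Icc, integral_Icc_eq_integral_Ioc,
      ← intervalIntegral.integral_of_le h1]
    rw [intervalIntegral.integral_smul]
    rw [intervalIntegral.integral_sub I1 I2]
    congr 1
    have e0 : (∫ t in (0:ℝ)..(v - δ n), γ (t + δ n)) = ∫ t in (δ n)..v, γ t := by
      rw [intervalIntegral.integral_comp_add_right (fun t => γ t) (δ n)]
      norm_num
    rw [e0]
    have a1 : (∫ t in (0:ℝ)..(δ n), γ t) + (∫ t in (δ n)..v, γ t) = ∫ t in (0:ℝ)..v, γ t :=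
      intervalIntegral.integral_add_adjacent_intervals
        (hII le_rfl (hδpos n).le ((hδle n).trans hvb)) (hII (hδpos n).le (hδle n) hvb)
    have a2 : (∫ t in (0:ℝ)..(v - δ n), γ t) + (∫ t in (v - δ n)..v, γ t)
        = ∫ t in (0:ℝ)..v, γ t :=
      intervalIntegral.integral_add_adjacent_intervals I2 (hII h1 (by linarith [(hδpos n).le]) hvb)
    rw [← a2] at a1
    abel_nf at a1 ⊢
    linear_combination (norm := abel_nf) a1
  
  -- Step B : ∫ g n tends to γ v - γ 0
  have hbd : ∀ (w c : ℝ) (n : ℕ), 0 ≤ w - δ n → w ≤ b → c ∈ Icc (w - δ n) w →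
      ‖(δ n)⁻¹ • (∫ t in (w - δ n)..w, γ t) - γ c‖ ≤ (L : ℝ) * δ n := by
    intro w c n hwδ hwb hc
    have hδn := hδpos n
    have hc0 : 0 ≤ c := le_trans hwδ hc.1
    have hcb : c ≤ b := hc.2.trans hwb
    have e1 : (∫ t in (w - δ n)..w, γ t) - (δ n) • γ c = ∫ t in (w - δ n)..w, (γ t - γ c) := by
      rw [intervalIntegral.integral_sub (hII (by linarith) (by linarith) hwb)
        intervalIntegrable_const, intervalIntegral.integral_const]
      norm_num
    have e2 : (δ n)⁻¹ • (∫ t in (w - δ n)..w, γ t) - γ c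
        = (δ n)⁻¹ • (∫ t in (w - δ n)..w, (γ t - γ c)) := by
      rw [← e1, smul_sub, smul_smul, inv_mul_cancel₀ hδn.ne', one_smul]
    rw [e2, norm_smul, Real.norm_eq_abs, abs_of_pos (inv_pos.2 hδn)]
    have hnormb : ‖∫ t in (w - δ n)..w, (γ t - γ c)‖ ≤ ((L:ℝ) * δ n) * |w - (w - δ n)| := by
      apply intervalIntegral.norm_integral_le_of_norm_le_const
      intro x hx
      rw [uIoc_of_le (by linarith)] at hx
      have hx1 : x ∈ Icc 0 b := ⟨by linarith [hx.1.le], hx.2.trans hwb⟩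
      have hc1 : c ∈ Icc 0 b := ⟨hc0, hcb⟩
      have hlipd := hlip.dist_le_mul x hx1 c hc1
      rw [dist_eq_norm] at hlipd
      apply hlipd.trans
      have hdxc : dist x c ≤ δ n := by
        rw [Real.dist_eq, abs_le]
        exact ⟨by linarith [hx.1, hc.2], by linarith [hx.2, hc.1]⟩
      nlinarith [L.coe_nonneg]
    have habs : |w - (w - δ n)| = δ n := by
      rw [show w - (w - δ n) = δ n by ring]; exact abs_of_nonneg hδn.le
    rw [habs] at hnormb
    calc (δ n)⁻¹ * ‖∫ t in (w - δ n)..w, (γ t - γ c)‖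
        ≤ (δ n)⁻¹ * (((L:ℝ) * δ n) * δ n) := by
          apply mul_le_mul_of_nonneg_left hnormb (inv_pos.2 hδn).le
      _ = (L:ℝ) * δ n := by field_simp
  have hLδ : Tendsto (fun n => (L:ℝ) * δ n) atTop (𝓝 0) := by
    simpa using hδto.const_mul (L:ℝ)
  have hB1 : Tendsto (fun n => (δ n)⁻¹ • (∫ t in (v - δ n)..v, γ t)) atTop (𝓝 (γ v)) := by
    rw [← tendsto_sub_nhds_zero_iff]
    apply squeeze_zero_norm (fun n => hbd v v n (by linarith [hδle n]) hvb ⟨by linarith [hδpos n], le_rfl⟩) hLδ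
  have hB2 : Tendsto (fun n => (δ n)⁻¹ • (∫ t in (0:ℝ)..(δ n), γ t)) atTop (𝓝 (γ 0)) := by
    rw [← tendsto_sub_nhds_zero_iff]
    have : ∀ n, ‖(δ n)⁻¹ • (∫ t in (0:ℝ)..(δ n), γ t) - γ 0‖ ≤ (L : ℝ) * δ n := by
      intro n
      have h := hbd (δ n) 0 n (by norm_num) ((hδle n).trans hvb) ⟨by norm_num, (hδpos n).le⟩
      simpa using h
    exact squeeze_zero_norm this hLδ
  have stepB : Tendsto (fun n => ∫ t, g n t) atTop (𝓝 (γ v - γ 0)) := by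
    have : Tendsto (fun n => (δ n)⁻¹ • (∫ t in (v - δ n)..v, γ t)
        - (δ n)⁻¹ • (∫ t in (0:ℝ)..(δ n), γ t)) atTop (𝓝 (γ v - γ 0)) := hB1.sub hB2
    apply this.congr
    intro n
    rw [stepA n, smul_sub]
  -- Step C : dominated convergence
  have meas_g : ∀ n, AEStronglyMeasurable (g n) volume := by
    intro n
    rw [hgdef]
    apply (aestronglyMeasurable_indicator_iff measurableSet_Icc).2
    apply ContinuousOn.aestronglyMeasurable ?_ measurableSet_Icc
    exact (continuousOn_const.smul ((hshiftcont n).sub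
      (hcont.mono (Icc_subset_Icc le_rfl (by linarith [hδpos n, hvb])))))
  have bound_int : Integrable ((Set.Icc (0:ℝ) v).indicator fun _ => (L:ℝ)) volume := by
    apply IntegrableOn.integrable_indicator _ measurableSet_Icc
    exact integrableOn_const (by rw [Real.volume_Icc]; exact ENNReal.ofReal_ne_top)
  have h_bound : ∀ n, ∀ᵐ t ∂(volume : Measure ℝ),
      ‖g n t‖ ≤ (Set.Icc (0:ℝ) v).indicator (fun _ => (L:ℝ)) t := by
    intro n
    apply Filter.Eventually.of_forall
    intro t
    simp only [hgdef]
    by_cases ht : t ∈ Set.Icc 0 (v - δ n)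
    · rw [Set.indicator_of_mem ht]
      have htv : t ∈ Set.Icc (0:ℝ) v := ⟨ht.1, ht.2.trans (by linarith [hδpos n])⟩
      rw [Set.indicator_of_mem htv]
      rw [norm_smul, Real.norm_eq_abs, abs_of_pos (inv_pos.2 (hδpos n))]
      have h1 : t ∈ Icc 0 b := ⟨ht.1, le_trans (ht.2.trans (by linarith [hδpos n])) hvb⟩
      have h2 : t + δ n ∈ Icc 0 b := ⟨by linarith [ht.1, (hδpos n).le], by
        have := ht.2; linarith⟩
      have := hlip.dist_le_mul (t + δ n) h2 t h1
      rw [dist_eq_norm] at this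
      have hd : dist (t + δ n) t = δ n := by
        rw [Real.dist_eq, abs_of_nonneg (by linarith [(hδpos n).le])]; ring
      rw [hd] at this
      calc (δ n)⁻¹ * ‖γ (t + δ n) - γ t‖ ≤ (δ n)⁻¹ * ((L:ℝ) * δ n) := by
            apply mul_le_mul_of_nonneg_left this (inv_pos.2 (hδpos n)).le
        _ = (L:ℝ) := by rw [mul_comm (L:ℝ), ← mul_assoc, inv_mul_cancel₀ (hδpos n).ne', one_mul]
    · rw [Set.indicator_of_notMem ht, norm_zero]
      exact Set.indicator_nonneg (fun _ _ => L.coe_nonneg) t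
  have h_lim : ∀ᵐ t ∂(volume : Measure ℝ), Tendsto (fun n => g n t) atTop (𝓝 (F t)) := by
    have hae : ∀ᵐ t ∂(volume : Measure ℝ), t ∈ Icc 0 b → DifferentiableAt ℝ γ t :=
      (ae_restrict_iff' measurableSet_Icc).mp hdiff
    have hne0 : ∀ᵐ t ∂(volume : Measure ℝ), t ≠ 0 := by
      rw [ae_iff]; simpa using measure_singleton (0:ℝ)
    have hnev : ∀ᵐ t ∂(volume : Measure ℝ), t ≠ v := by
      rw [ae_iff]; simpa using measure_singleton v
    filter_upwards [hae, hne0, hnev] with t ht ht0 htv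
    by_cases h1 : t ∈ Ioo 0 v
    · have hdt : DifferentiableAt ℝ γ t := ht ⟨h1.1.le, h1.2.le.trans hvb⟩
      rw [hFdef, Set.indicator_of_mem h1]
      have hslope := hdt.hasDerivAt.tendsto_slope_zero
      have hδnz : Tendsto δ atTop (𝓝[≠] (0:ℝ)) := by
        apply tendsto_nhdsWithin_of_tendsto_nhds_of_eventually_within _ hδto
        exact Eventually.of_forall fun n => (hδpos n).ne'
      have hcomp := hslope.comp hδnz
      apply hcomp.congr'
      have hev : ∀ᶠ n in atTop, δ n < v - t :=
        hδto.eventually_lt_const (by linarith [h1.2] : (0:ℝ) < v - t)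
      filter_upwards [hev] with n hn
      have htmem : t ∈ Set.Icc 0 (v - δ n) := ⟨h1.1.le, by linarith⟩
      simp only [hgdef, Function.comp_apply]
      rw [Set.indicator_of_mem htmem]
    · rw [hFdef, Set.indicator_of_notMem h1]
      have htout : t < 0 ∨ v < t := by
        rcases lt_or_ge t 0 with h | h
        · exact Or.inl h
        · right
          rcases lt_or_ge v t with h2 | h2
          · exact h2
          · exact absurd ⟨lt_of_le_of_ne h (Ne.symm ht0), lt_of_le_of_ne h2 htv⟩ h1
      apply tendsto_const_nhds.congr
      intro n
      simp only [hgdef]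
      symm
      apply Set.indicator_of_notMem
      intro hmem
      rcases htout with h | h
      · exact absurd hmem.1 (not_le.2 h)
      · have := hmem.2; have := hδpos n; linarith [hmem.2]
  have hDCT := MeasureTheory.tendsto_integral_of_dominated_convergence _ meas_g bound_int
    h_bound h_lim
  have hFeq : ∫ t, F t = γ v - γ 0 := tendsto_nhds_unique hDCT stepB
  rw [intervalIntegral.integral_of_le hv0.le, integral_Ioc_eq_integral_Ioo]
  rw [hFdef] at hFeq
  rw [MeasureTheory.integral_indicator measurableSet_Ioo] at hFeq
  exact hFeq


lemma conv_ineq {X : Type*} [NormedAddCommGroup X] [NormedSpace ℝ X] {M : ℝ}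
    (hconv : ∀ ε : ℝ, 0 < ε → ε ≤ 2 → M * ε ^ 2 ≤ modulusConvexity X ε)
    {u v : X} (hu : ‖u‖ = 1) (hv : ‖v‖ = 1) :
    ‖(2:ℝ)⁻¹ • (u + v)‖ ≤ 1 - M * ‖u - v‖ ^ 2 := by
  have hnorm : ‖(2:ℝ)⁻¹ • (u + v)‖ = ‖u + v‖ / 2 := by
    rw [norm_smul, Real.norm_eq_abs]
    norm_num [div_eq_inv_mul]
  rcases eq_or_ne u v with rfl | hne
  · simp only [sub_self, norm_zero]
    rw [hnorm]
    have : ‖u + u‖ = 2 := by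
      rw [← two_smul ℝ u, norm_smul, Real.norm_eq_abs, hu]; norm_num
    rw [this]; norm_num
  · have hεpos : 0 < ‖u - v‖ := norm_pos_iff.2 (sub_ne_zero.2 hne)
    have hεle : ‖u - v‖ ≤ 2 := by
      calc ‖u - v‖ ≤ ‖u‖ + ‖v‖ := norm_sub_le u v
        _ = 2 := by rw [hu, hv]; norm_num
    have hbdd : BddBelow {c | ∃ x y : X, ‖x‖ = 1 ∧ ‖y‖ = 1 ∧ ‖x - y‖ = ‖u - v‖ ∧
        c = 1 - ‖x + y‖ / 2} := by
      refine ⟨0, ?_⟩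
      rintro c ⟨x, y, hx, hy, -, rfl⟩
      have := norm_add_le x y
      rw [hx, hy] at this
      linarith
    have hmem : (1 - ‖u + v‖ / 2) ∈ {c | ∃ x y : X, ‖x‖ = 1 ∧ ‖y‖ = 1 ∧ ‖x - y‖ = ‖u - v‖ ∧
        c = 1 - ‖x + y‖ / 2} := ⟨u, v, hu, hv, rfl, rfl⟩
    have h := (hconv _ hεpos hεle).trans (csInf_le hbdd hmem)
    rw [hnorm]
    linarith


lemma smooth_ineq {X : Type*} [NormedAddCommGroup X] [NormedSpace ℝ X] {K : ℝ} (hK : 0 < K)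
    (hsmooth : ∀ τ : ℝ, 0 < τ → modulusSmoothness X τ ≤ K * τ ^ 2)
    {p q : X} (hz : 2 ≤ ‖p + q‖) :
    ‖p‖ + ‖q‖ ≤ ‖p + q‖ + (K / 2) * ‖p - q‖ ^ 2 := by
  rcases eq_or_ne p q with rfl | hne
  · have : ‖p + p‖ = 2 * ‖p‖ := by rw [← two_smul ℝ p, norm_smul, Real.norm_eq_abs]; norm_num
    simp only [sub_self, norm_zero]
    rw [this]; nlinarith [sq_nonneg (0:ℝ)]
  · set z := p + q with hzdef
    have hzpos : (0:ℝ) < ‖z‖ := lt_of_lt_of_le two_pos hz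
    have hznz : z ≠ 0 := by intro h; rw [h, norm_zero] at hzpos; exact lt_irrefl _ hzpos
    set τ := ‖p - q‖ / ‖z‖ with hτdef
    have hdpos : 0 < ‖p - q‖ := norm_pos_iff.2 (sub_ne_zero.2 hne)
    have hτpos : 0 < τ := div_pos hdpos hzpos
    set x := (‖z‖)⁻¹ • z with hxdef
    set y := (‖z‖)⁻¹ • (p - q) with hydef
    have hx : ‖x‖ = 1 := by
      rw [hxdef, norm_smul, Real.norm_eq_abs, abs_of_pos (inv_pos.2 hzpos)]
      field_simp
    have hy : ‖y‖ = τ := by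
      rw [hydef, norm_smul, Real.norm_eq_abs, abs_of_pos (inv_pos.2 hzpos), hτdef]
      ring
    have hbddA : BddAbove {c | ∃ x' y' : X, ‖x'‖ = 1 ∧ ‖y'‖ = τ ∧
        c = (‖x' + y'‖ + ‖x' - y'‖) / 2 - 1} := by
      refine ⟨τ, ?_⟩
      rintro c ⟨x', y', hx', hy', rfl⟩
      have h1 := norm_add_le x' y'
      have h2 := norm_sub_le x' y'
      rw [hx', hy'] at h1 h2
      linarith
    have hmem : ((‖x + y‖ + ‖x - y‖) / 2 - 1) ∈ {c | ∃ x' y' : X, ‖x'‖ = 1 ∧ ‖y'‖ = τ ∧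
        c = (‖x' + y'‖ + ‖x' - y'‖) / 2 - 1} := ⟨x, y, hx, hy, rfl⟩
    have h := (le_csSup hbddA hmem).trans (hsmooth τ hτpos)
    have hxy1 : x + y = (‖z‖)⁻¹ • ((2:ℝ) • p) := by
      rw [hxdef, hydef, ← smul_add, hzdef]
      congr 1
      rw [two_smul]
      abel
    have hxy2 : x - y = (‖z‖)⁻¹ • ((2:ℝ) • q) := by
      rw [hxdef, hydef, ← smul_sub, hzdef]
      congr 1
      rw [two_smul]
      abel
    have hn1 : ‖x + y‖ = 2 * ‖p‖ / ‖z‖ := by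
      rw [hxy1, norm_smul, norm_smul, Real.norm_eq_abs, Real.norm_eq_abs,
        abs_of_pos (inv_pos.2 hzpos), abs_of_pos (two_pos)]
      ring
    have hn2 : ‖x - y‖ = 2 * ‖q‖ / ‖z‖ := by
      rw [hxy2, norm_smul, norm_smul, Real.norm_eq_abs, Real.norm_eq_abs,
        abs_of_pos (inv_pos.2 hzpos), abs_of_pos (two_pos)]
      ring
    rw [hn1, hn2, hτdef] at h
    -- h : (2‖p‖/‖z‖ + 2‖q‖/‖z‖)/2 - 1 ≤ K * (‖p-q‖/‖z‖)^2
    have hz2 : (0:ℝ) < ‖z‖^2 := by positivity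
    have h' : ‖p‖ + ‖q‖ ≤ ‖z‖ + K * ‖p - q‖^2 / ‖z‖ := by
      have hmul := mul_le_mul_of_nonneg_right h hzpos.le
      have e1 : ((2 * ‖p‖ / ‖z‖ + 2 * ‖q‖ / ‖z‖) / 2 - 1) * ‖z‖ = ‖p‖ + ‖q‖ - ‖z‖ := by
        field_simp
      have e2 : K * (‖p - q‖ / ‖z‖) ^ 2 * ‖z‖ = K * ‖p - q‖ ^ 2 / ‖z‖ := by
        field_simp
      rw [e1, e2] at hmul
      linarith
    have hlast : K * ‖p - q‖^2 / ‖z‖ ≤ (K/2) * ‖p - q‖^2 := by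
      rw [div_le_iff₀ hzpos]
      nlinarith [mul_nonneg (mul_nonneg hK.le (sq_nonneg ‖p - q‖)) (sub_nonneg.2 hz)]
    linarith


set_option maxHeartbeats 1000000 in
lemma pointwise_key {X : Type*} [NormedAddCommGroup X] [NormedSpace ℝ X] {M K : ℝ}
    (hM : 0 < M) (hK : 0 < K)
    (hconv : ∀ ε : ℝ, 0 < ε → ε ≤ 2 → M * ε ^ 2 ≤ modulusConvexity X ε)
    (hsmooth : ∀ τ : ℝ, 0 < τ → modulusSmoothness X τ ≤ K * τ ^ 2)
    {p q u v : X} (hu : ‖u‖ = 1) (hv : ‖v‖ = 1)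
    (hp1 : 1 ≤ ‖p‖) (hp2 : ‖p‖ ≤ 2) (hq1 : 1 ≤ ‖q‖) (hq2 : ‖q‖ ≤ 2)
    (hm1 : 1 ≤ ‖(2:ℝ)⁻¹ • (p + q)‖) :
    ‖(2:ℝ)⁻¹ • (u + v)‖ / ‖(2:ℝ)⁻¹ • (p + q)‖ + (M/2) * ‖u - v‖ ^ 2
      ≤ (‖p‖⁻¹ + ‖q‖⁻¹) / 2 + (K/4) * ‖p - q‖ ^ 2 := by
  set a := ‖p‖
  set b := ‖q‖
  set m := ‖(2:ℝ)⁻¹ • (p + q)‖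
  set N := ‖(2:ℝ)⁻¹ • (u + v)‖
  set d := ‖p - q‖
  set ε := ‖u - v‖
  have hN0 : 0 ≤ N := norm_nonneg _
  have hNle : N ≤ 1 - M * ε ^ 2 := conv_ineq hconv hu hv
  have hMε : M * ε ^ 2 ≤ 1 := by linarith
  have hzn : ‖p + q‖ = 2 * m := by
    have : m = ‖p + q‖ / 2 := by
      rw [show m = ‖(2:ℝ)⁻¹ • (p + q)‖ from rfl, norm_smul, Real.norm_eq_abs]
      norm_num [div_eq_inv_mul]
    rw [this]; ring
  have hz2 : 2 ≤ ‖p + q‖ := by rw [hzn]; linarith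
  have hsm : a + b ≤ 2 * m + (K/2) * d ^ 2 := by
    have := smooth_ineq hK hsmooth (p := p) (q := q) hz2
    rw [hzn] at this
    exact this
  have htri : 2 * m ≤ a + b := by
    rw [← hzn]; exact norm_add_le p q
  have hm2 : m ≤ 2 := by linarith
  have hapos : (0:ℝ) < a := lt_of_lt_of_le one_pos hp1
  have hbpos : (0:ℝ) < b := lt_of_lt_of_le one_pos hq1
  have hmpos : (0:ℝ) < m := lt_of_lt_of_le one_pos hm1
  have hd0 : (0:ℝ) ≤ d := norm_nonneg _
  have hε0 : (0:ℝ) ≤ ε := norm_nonneg _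
  have hab1 : (1:ℝ) ≤ a * b := by nlinarith
  have hsab : a + b ≤ 2 * (a * b) := by nlinarith [mul_nonneg (sub_nonneg.2 hp1) (sub_nonneg.2 hq1)]
  have e : (a⁻¹ + b⁻¹) / 2 = (a + b) / (2 * (a * b)) := by
    field_simp
    ring
  rw [e]
  rw [div_add' _ _ _ hmpos.ne']
  rw [div_add' _ _ _ (by positivity : (2 * (a * b)) ≠ 0)]
  rw [div_le_div_iff₀ hmpos (by positivity)]
  have key1 : 2 * (a * b) ≤ m * (a + b) + (K/4) * d^2 * (a + b) := by
    nlinarith [mul_le_mul_of_nonneg_right hsm (by linarith : (0:ℝ) ≤ a + b), sq_nonneg (a - b)]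
  have h5 : a + b ≤ 2 * (a * b) * m := by nlinarith [hsab, hab1, hm1]
  have key2 : (K/4) * d^2 * (a + b) ≤ (K/2) * d^2 * (a * b) * m := by
    have h6 := mul_le_mul_of_nonneg_left h5 (by positivity : (0:ℝ) ≤ (K/4) * d^2)
    calc (K/4) * d^2 * (a + b) ≤ (K/4) * d^2 * (2 * (a * b) * m) := h6
      _ = (K/2) * d^2 * (a * b) * m := by ring
  have key3 : (N + M/2 * ε^2 * m) * (2 * (a * b)) ≤ 2 * (a*b) - M * ε^2 * (a*b) * (2 - m) := by
    nlinarith [mul_le_mul_of_nonneg_right hNle (by positivity : (0:ℝ) ≤ 2 * (a*b))]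
  have key4 : (0:ℝ) ≤ M * ε^2 * (a*b) * (2 - m) := by
    apply mul_nonneg (by positivity) (by linarith)
  have expand : (a + b + K/4 * d^2 * (2 * (a * b))) * m
      = m * (a + b) + (K/2) * d^2 * (a * b) * m := by ring
  linarith [key1, key2, key3, key4]


set_option maxHeartbeats 1600000 in
/-- In a punctured Banach space, uniformly convex and uniformly smooth of power type 2:
for short unit-speed paths with equal quasihyperbolic lengths and a common starting point,
either the pointwise-average path has strictly smaller quasihyperbolic length, or the two
paths coincide. -/
theorem qh_strict_averaging_punctured
    {X : Type*} [NormedAddCommGroup X] [NormedSpace ℝ X] [CompleteSpace X]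
    (M K : ℝ) (hM : 0 < M) (hK : 0 < K)
    (hconv : ∀ ε : ℝ, 0 < ε → ε ≤ 2 → M * ε ^ 2 ≤ modulusConvexity X ε)
    (hsmooth : ∀ τ : ℝ, 0 < τ → modulusSmoothness X τ ≤ K * τ ^ 2) :
    ∃ R > 0, ∀ (t₁ : ℝ), 0 ≤ t₁ → ∀ γ₁ γ₂ : ℝ → X,
      -- rectifiable, a.e. differentiable paths (e.g. Lipschitz)
      (∃ L : NNReal, LipschitzOnWith L γ₁ (Set.Icc 0 t₁)) →
      (∃ L : NNReal, LipschitzOnWith L γ₂ (Set.Icc 0 t₁)) →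
      (∀ᵐ t ∂(MeasureTheory.volume.restrict (Set.Icc 0 t₁)), DifferentiableAt ℝ γ₁ t) →
      (∀ᵐ t ∂(MeasureTheory.volume.restrict (Set.Icc 0 t₁)), DifferentiableAt ℝ γ₂ t) →
      -- common starting point
      γ₁ 0 = γ₂ 0 →
      -- unit speed
      (∀ᵐ t ∂(MeasureTheory.volume.restrict (Set.Icc 0 t₁)), ‖deriv γ₁ t‖ = 1) →
      (∀ᵐ t ∂(MeasureTheory.volume.restrict (Set.Icc 0 t₁)), ‖deriv γ₂ t‖ = 1) →
      -- the paths and their pointwise average stay in the annulus 1 ≤ ‖z‖ ≤ 2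
      (∀ t ∈ Set.Icc 0 t₁, 1 ≤ ‖γ₁ t‖ ∧ ‖γ₁ t‖ ≤ 2) →
      (∀ t ∈ Set.Icc 0 t₁, 1 ≤ ‖γ₂ t‖ ∧ ‖γ₂ t‖ ≤ 2) →
      (∀ t ∈ Set.Icc 0 t₁, 1 ≤ ‖(2 : ℝ)⁻¹ • (γ₁ t + γ₂ t)‖ ∧
        ‖(2 : ℝ)⁻¹ • (γ₁ t + γ₂ t)‖ ≤ 2) →
      -- equal quasihyperbolic lengths bounded by R
      qhLengthPunct γ₁ 0 t₁ = qhLengthPunct γ₂ 0 t₁ →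
      qhLengthPunct γ₁ 0 t₁ ≤ R →
      -- conclusion: strict inequality for the average path, or the paths coincide
      ((qhLengthPunct γ₁ 0 t₁ + qhLengthPunct γ₂ 0 t₁) / 2 >
          qhLengthPunct (fun s => (2 : ℝ)⁻¹ • (γ₁ s + γ₂ s)) 0 t₁) ∨
        (∀ t ∈ Set.Icc 0 t₁, γ₁ t = γ₂ t) := by
  have hRpos : (0:ℝ) < Real.sqrt (M / (8 * K)) := Real.sqrt_pos.mpr (by positivity)
  refine ⟨Real.sqrt (M / (8 * K)), hRpos, ?_⟩
  set R := Real.sqrt (M / (8 * K)) with hRdef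
  have hR2 : R ^ 2 = M / (8 * K) := Real.sq_sqrt (by positivity)
  intro t₁ ht₁ γ₁ γ₂ hLip₁ hLip₂ hdiff₁ hdiff₂ hstart hu₁ hu₂ hA₁ hA₂ hAm hlen hR
  rcases eq_or_lt_of_le ht₁ with ht0 | ht₁pos
  · right
    intro t ht
    have htt : t = 0 := le_antisymm (by rw [← ht0] at ht; exact ht.2) ht.1
    rw [htt, hstart]
  obtain ⟨L₁, hL₁⟩ := hLip₁
  obtain ⟨L₂, hL₂⟩ := hLip₂
  set μ : Measure ℝ := volume.restrict (Set.Ioc 0 t₁) with hμdef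
  haveI : IsFiniteMeasure μ := ⟨by
    rw [hμdef, Measure.restrict_apply_univ]; exact measure_Ioc_lt_top⟩
  set mid : ℝ → X := fun s => (2:ℝ)⁻¹ • (γ₁ s + γ₂ s) with hmiddef
  have hsub : Set.Ioc 0 t₁ ⊆ Set.Icc 0 t₁ := Set.Ioc_subset_Icc_self
  have hdiff₁' : ∀ᵐ t ∂μ, DifferentiableAt ℝ γ₁ t :=
    ae_restrict_of_ae_restrict_of_subset hsub hdiff₁
  have hdiff₂' : ∀ᵐ t ∂μ, DifferentiableAt ℝ γ₂ t :=
    ae_restrict_of_ae_restrict_of_subset hsub hdiff₂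
  have hu₁' : ∀ᵐ t ∂μ, ‖deriv γ₁ t‖ = 1 := ae_restrict_of_ae_restrict_of_subset hsub hu₁
  have hu₂' : ∀ᵐ t ∂μ, ‖deriv γ₂ t‖ = 1 := ae_restrict_of_ae_restrict_of_subset hsub hu₂
  have hmem : ∀ᵐ t ∂μ, t ∈ Set.Ioc 0 t₁ := ae_restrict_mem measurableSet_Ioc
  -- abbreviations
  set F₁ : ℝ → ℝ := fun t => ‖deriv γ₁ t‖ / ‖γ₁ t‖ with hF₁def
  set F₂ : ℝ → ℝ := fun t => ‖deriv γ₂ t‖ / ‖γ₂ t‖ with hF₂def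
  set Fm : ℝ → ℝ := fun t => ‖deriv mid t‖ / ‖mid t‖ with hFmdef
  set G : ℝ → ℝ := fun t => (‖γ₁ t‖⁻¹ + ‖γ₂ t‖⁻¹) / 2 with hGdef
  set eps : ℝ → ℝ := fun t => ‖deriv γ₁ t - deriv γ₂ t‖ with hepsdef
  set dd : ℝ → ℝ := fun t => ‖γ₁ t - γ₂ t‖ with hdddef
  -- measurability
  have hγ₁m : AEStronglyMeasurable γ₁ μ :=
    (hL₁.continuousOn.aestronglyMeasurable measurableSet_Icc).mono_measure
      (Measure.restrict_mono hsub le_rfl)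
  have hγ₂m : AEStronglyMeasurable γ₂ μ :=
    (hL₂.continuousOn.aestronglyMeasurable measurableSet_Icc).mono_measure
      (Measure.restrict_mono hsub le_rfl)
  have hd₁m : AEStronglyMeasurable (deriv γ₁) μ := (stronglyMeasurable_deriv γ₁).aestronglyMeasurable
  have hd₂m : AEStronglyMeasurable (deriv γ₂) μ := (stronglyMeasurable_deriv γ₂).aestronglyMeasurable
  have hdmm : AEStronglyMeasurable (deriv mid) μ := (stronglyMeasurable_deriv mid).aestronglyMeasurable
  have hmidm : AEStronglyMeasurable mid μ := (aestronglyMeasurable_const.smul (hγ₁m.add hγ₂m))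
  have hF₁m : AEMeasurable F₁ μ := (hd₁m.norm.aemeasurable).div (hγ₁m.norm.aemeasurable)
  have hF₂m : AEMeasurable F₂ μ := (hd₂m.norm.aemeasurable).div (hγ₂m.norm.aemeasurable)
  have hFmm : AEMeasurable Fm μ := (hdmm.norm.aemeasurable).div (hmidm.norm.aemeasurable)
  have hGm : AEMeasurable G μ :=
    (((hγ₁m.norm.aemeasurable).inv.add (hγ₂m.norm.aemeasurable).inv).div_const 2)
  have hepsm : AEMeasurable eps μ := (hd₁m.sub hd₂m).norm.aemeasurable
  have hddm : AEMeasurable dd μ := (hγ₁m.sub hγ₂m).norm.aemeasurable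
  -- integrability helper
  have hint : ∀ (f : ℝ → ℝ), AEMeasurable f μ → ∀ C : ℝ, (∀ᵐ t ∂μ, |f t| ≤ C) →
      Integrable f μ := fun f hm C hb =>
    (integrable_const C).mono' hm.aestronglyMeasurable
      (by simpa [Real.norm_eq_abs] using hb)
    -- a.e. facts
  have hb₁ : ∀ᵐ t ∂μ, F₁ t = ‖γ₁ t‖⁻¹ ∧ 1/2 ≤ F₁ t ∧ F₁ t ≤ 1 := by
    filter_upwards [hu₁', hmem] with t hu ht
    have ha := hA₁ t (hsub ht)
    have ha1 : (0:ℝ) < ‖γ₁ t‖ := lt_of_lt_of_le one_pos ha.1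
    have he : F₁ t = ‖γ₁ t‖⁻¹ := by rw [hF₁def]; dsimp only; rw [hu, one_div]
    refine ⟨he, ?_, ?_⟩
    · rw [he]; rw [le_inv_comm₀ (by norm_num) ha1]; simpa using ha.2
    · rw [he]; exact inv_le_one_of_one_le₀ ha.1
  have hb₂ : ∀ᵐ t ∂μ, F₂ t = ‖γ₂ t‖⁻¹ ∧ 1/2 ≤ F₂ t ∧ F₂ t ≤ 1 := by
    filter_upwards [hu₂', hmem] with t hu ht
    have ha := hA₂ t (hsub ht)
    have ha1 : (0:ℝ) < ‖γ₂ t‖ := lt_of_lt_of_le one_pos ha.1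
    have he : F₂ t = ‖γ₂ t‖⁻¹ := by rw [hF₂def]; dsimp only; rw [hu, one_div]
    refine ⟨he, ?_, ?_⟩
    · rw [he]; rw [le_inv_comm₀ (by norm_num) ha1]; simpa using ha.2
    · rw [he]; exact inv_le_one_of_one_le₀ ha.1
  have hmd : ∀ᵐ t ∂μ, deriv mid t = (2:ℝ)⁻¹ • (deriv γ₁ t + deriv γ₂ t) := by
    filter_upwards [hdiff₁', hdiff₂'] with t h₁ h₂
    have h := ((h₁.hasDerivAt.add h₂.hasDerivAt).const_smul ((2:ℝ)⁻¹))
    exact h.deriv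
  have hptw : ∀ᵐ t ∂μ, Fm t + (M/2) * eps t ^ 2 ≤ G t + (K/4) * dd t ^ 2 := by
    filter_upwards [hu₁', hu₂', hmd, hmem] with t h1 h2 h3 ht
    have ha := hA₁ t (hsub ht)
    have hb := hA₂ t (hsub ht)
    have hm := hAm t (hsub ht)
    have := pointwise_key hM hK hconv hsmooth h1 h2 ha.1 ha.2 hb.1 hb.2 hm.1
      (u := deriv γ₁ t) (v := deriv γ₂ t) (p := γ₁ t) (q := γ₂ t)
    rw [hFmdef]
    dsimp only
    rw [h3, hmiddef]
    exact this
  have hFm_bnd : ∀ᵐ t ∂μ, 0 ≤ Fm t ∧ Fm t ≤ 1 := by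
    filter_upwards [hu₁', hu₂', hmd, hmem] with t h1 h2 h3 ht
    have hm := hAm t (hsub ht)
    have hnum : ‖deriv mid t‖ ≤ 1 := by
      rw [h3]
      calc ‖(2:ℝ)⁻¹ • (deriv γ₁ t + deriv γ₂ t)‖
          = ‖deriv γ₁ t + deriv γ₂ t‖ / 2 := by
            rw [norm_smul, Real.norm_eq_abs]; norm_num [div_eq_inv_mul]
        _ ≤ (‖deriv γ₁ t‖ + ‖deriv γ₂ t‖) / 2 := by
            gcongr
            exact norm_add_le _ _
        _ = 1 := by rw [h1, h2]; norm_num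
    constructor
    · exact div_nonneg (norm_nonneg _) (norm_nonneg _)
    · rw [hFmdef]; dsimp only
      apply div_le_one_of_le₀ (hnum.trans hm.1) (norm_nonneg _)
  have heps_bnd : ∀ᵐ t ∂μ, |eps t| ≤ 2 := by
    filter_upwards [hu₁', hu₂'] with t h1 h2
    rw [abs_of_nonneg (norm_nonneg _)]
    calc eps t ≤ ‖deriv γ₁ t‖ + ‖deriv γ₂ t‖ := norm_sub_le _ _
      _ = 2 := by rw [h1, h2]; norm_num
  have hdd_bnd : ∀ᵐ t ∂μ, |dd t| ≤ 4 := by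
    filter_upwards [hmem] with t ht
    have ha := hA₁ t (hsub ht)
    have hb := hA₂ t (hsub ht)
    rw [abs_of_nonneg (norm_nonneg _)]
    calc dd t ≤ ‖γ₁ t‖ + ‖γ₂ t‖ := norm_sub_le _ _
      _ ≤ 4 := by linarith [ha.2, hb.2]
  -- integrability
  have intF₁ : Integrable F₁ μ := hint F₁ hF₁m 1 (by
    filter_upwards [hb₁] with t h; rw [abs_of_nonneg (by linarith [h.2.1] : (0:ℝ) ≤ F₁ t)]
    exact h.2.2)
  have intF₂ : Integrable F₂ μ := hint F₂ hF₂m 1 (by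
    filter_upwards [hb₂] with t h; rw [abs_of_nonneg (by linarith [h.2.1] : (0:ℝ) ≤ F₂ t)]
    exact h.2.2)
  have intFm : Integrable Fm μ := hint Fm hFmm 1 (by
    filter_upwards [hFm_bnd] with t h; rw [abs_of_nonneg h.1]; exact h.2)
  have intG : Integrable G μ := hint G hGm 1 (by
    filter_upwards [hb₁, hb₂] with t h1 h2
    rw [hGdef]; dsimp only
    rw [← h1.1, ← h2.1, abs_of_nonneg (by linarith [h1.2.1, h2.2.1])]
    linarith [h1.2.2, h2.2.2])
  have intEps : Integrable eps μ := hint eps hepsm 2 heps_bnd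
  have intEps2 : Integrable (fun t => eps t ^ 2) μ := hint _ (hepsm.pow_const 2) 4 (by
    filter_upwards [heps_bnd] with t h
    rw [abs_of_nonneg (sq_nonneg _)]
    have hnn : (0:ℝ) ≤ eps t := norm_nonneg _
    calc eps t ^ 2 ≤ 2 ^ 2 := by nlinarith [hnn, le_abs_self (eps t)]
      _ = 4 := by norm_num)
  have intDd2 : Integrable (fun t => dd t ^ 2) μ := hint _ (hddm.pow_const 2) 16 (by
    filter_upwards [hdd_bnd] with t h
    rw [abs_of_nonneg (sq_nonneg _)]
    have hnn : (0:ℝ) ≤ dd t := norm_nonneg _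
    calc dd t ^ 2 ≤ 4 ^ 2 := by nlinarith [hnn, le_abs_self (dd t)]
      _ = 16 := by norm_num)
    -- rewriting the qh lengths as integrals over μ
  have hq₁ : qhLengthPunct γ₁ 0 t₁ = ∫ t, F₁ t ∂μ := by
    rw [qhLengthPunct, intervalIntegral.integral_of_le ht₁]
  have hq₂ : qhLengthPunct γ₂ 0 t₁ = ∫ t, F₂ t ∂μ := by
    rw [qhLengthPunct, intervalIntegral.integral_of_le ht₁]
  have hqm : qhLengthPunct mid 0 t₁ = ∫ t, Fm t ∂μ := by
    rw [qhLengthPunct, intervalIntegral.integral_of_le ht₁]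
  -- main integral inequality
  have hmono : ∫ t, (Fm t + (M/2) * eps t ^ 2) ∂μ ≤ ∫ t, (G t + (K/4) * dd t ^ 2) ∂μ := by
    apply integral_mono_ae (intFm.add (intEps2.const_mul (M/2)))
      (intG.add (intDd2.const_mul (K/4)))
    exact hptw
  rw [integral_add intFm (intEps2.const_mul (M/2)),
    integral_add intG (intDd2.const_mul (K/4)),
    MeasureTheory.integral_const_mul, MeasureTheory.integral_const_mul] at hmono
  set E : ℝ := ∫ t, eps t ^ 2 ∂μ with hEdef
  set D : ℝ := ∫ t, dd t ^ 2 ∂μ with hDdef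
  set A : ℝ := ∫ t, eps t ∂μ with hAdef
  -- G integral equals average of lengths
  have hGeq : ∫ t, G t ∂μ = (qhLengthPunct γ₁ 0 t₁ + qhLengthPunct γ₂ 0 t₁) / 2 := by
    have hcongr : ∫ t, G t ∂μ = ∫ t, (F₁ t + F₂ t) / 2 ∂μ := by
      apply MeasureTheory.integral_congr_ae
      filter_upwards [hb₁, hb₂] with t h1 h2
      rw [hGdef]; dsimp only
      rw [← h1.1, ← h2.1]
    rw [hcongr, MeasureTheory.integral_div, integral_add intF₁ intF₂, hq₁, hq₂]
  -- bound t₁ by 2R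
  have hμuniv : (μ Set.univ).toReal = t₁ := by
    rw [hμdef, Measure.restrict_apply_univ, Real.volume_Ioc]
    simp [ht₁]
  have hl1 : t₁ / 2 ≤ ∫ t, F₁ t ∂μ := by
    have h := integral_mono_ae (integrable_const (1/2 : ℝ)) intF₁
      (by filter_upwards [hb₁] with t h; exact h.2.1)
    rw [MeasureTheory.integral_const, measureReal_def, hμuniv, smul_eq_mul] at h
    linarith
  have ht₁le : t₁ ≤ 2 * R := by
    rw [hq₁] at hR
    linarith
  -- FTC consequences
  have hd_int : ∀ t, 0 < t → t ≤ t₁ → IntervalIntegrable (deriv γ₁) volume 0 t ∧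
      IntervalIntegrable (deriv γ₂) volume 0 t := by
    intro t ht0 htle
    have hsub2 : Set.Ioc 0 t ⊆ Set.Icc 0 t₁ := fun x hx => ⟨hx.1.le, hx.2.trans htle⟩
    constructor
    · rw [intervalIntegrable_iff_integrableOn_Ioc_of_le ht0.le]
      apply (integrable_const (1:ℝ)).mono'
        ((stronglyMeasurable_deriv γ₁).aestronglyMeasurable)
      filter_upwards [ae_restrict_of_ae_restrict_of_subset hsub2 hu₁] with x hx
      rw [hx]
    · rw [intervalIntegrable_iff_integrableOn_Ioc_of_le ht0.le]
      apply (integrable_const (1:ℝ)).mono'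
        ((stronglyMeasurable_deriv γ₂).aestronglyMeasurable)
      filter_upwards [ae_restrict_of_ae_restrict_of_subset hsub2 hu₂] with x hx
      rw [hx]
  have hftc : ∀ t, 0 < t → t ≤ t₁ →
      γ₁ t - γ₂ t = ∫ s in (0:ℝ)..t, (deriv γ₁ s - deriv γ₂ s) := by
    intro t ht0 htle
    have h₁ := lip_ftc hL₁ hdiff₁ ht0 htle
    have h₂ := lip_ftc hL₂ hdiff₂ ht0 htle
    obtain ⟨hi₁, hi₂⟩ := hd_int t ht0 htle
    rw [intervalIntegral.integral_sub hi₁ hi₂, h₁, h₂, hstart]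
    abel
  have hA0 : 0 ≤ A := integral_nonneg (fun t => norm_nonneg _)
  have hdd_le : ∀ t ∈ Set.Ioc 0 t₁, dd t ≤ A := by
    intro t ht
    have heq := hftc t ht.1 ht.2
    have h1 : dd t ≤ ∫ s in (0:ℝ)..t, eps s := by
      rw [hdddef]; dsimp only
      rw [heq]
      exact intervalIntegral.norm_integral_le_integral_norm ht.1.le
    apply h1.trans
    rw [intervalIntegral.integral_of_le ht.1.le]
    apply setIntegral_mono_set intEps
    · filter_upwards with x
      exact norm_nonneg _
    · exact HasSubset.Subset.eventuallyLE (Set.Ioc_subset_Ioc_right ht.2)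
  have hDle : D ≤ t₁ * A ^ 2 := by
    have h := integral_mono_ae intDd2 (integrable_const (A^2))
      (by filter_upwards [hmem] with t ht
          have h1 := hdd_le t ht
          have h2 : (0:ℝ) ≤ dd t := norm_nonneg _
          nlinarith)
    rw [MeasureTheory.integral_const, measureReal_def, hμuniv, smul_eq_mul] at h
    exact h
  have hE0 : 0 ≤ E := integral_nonneg (fun t => sq_nonneg _)
  -- Cauchy-Schwarz
  have hCS : A ^ 2 ≤ t₁ * E := by
    set c : ℝ := A / t₁ with hcdef
    have h0 : 0 ≤ ∫ t, (eps t - c)^2 ∂μ := integral_nonneg (fun t => sq_nonneg _)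
    have hexp : ∫ t, (eps t - c)^2 ∂μ = E - 2*c*A + c^2 * t₁ := by
      have he : (fun t => (eps t - c)^2) = fun t => (eps t^2 - 2*c * eps t) + c^2 := by
        funext t; ring
      have i1 : Integrable (fun t => eps t ^ 2 - 2*c * eps t) μ :=
        intEps2.sub (intEps.const_mul (2*c))
      have i2 : Integrable (fun t => 2*c * eps t) μ := intEps.const_mul (2*c)
      rw [he, integral_add i1 (integrable_const _),
        integral_sub intEps2 i2, MeasureTheory.integral_const_mul,
        MeasureTheory.integral_const, measureReal_def, hμuniv, smul_eq_mul]
      ring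
    rw [hexp] at h0
    have h0' : 0 ≤ E - A^2 / t₁ := by
      have e : E - 2*c*A + c^2 * t₁ = E - A^2/t₁ := by
        rw [hcdef]; field_simp; ring
      linarith [h0, e.symm.le, e.le]
    have h1 : A^2 / t₁ ≤ E := by linarith
    rw [div_le_iff₀ ht₁pos] at h1
    linarith
  -- assemble
  have hDfin : (K/4) * D ≤ (M/8) * E := by
    have h1 : D ≤ t₁^2 * E := by
      calc D ≤ t₁ * A^2 := hDle
        _ ≤ t₁ * (t₁ * E) := by
            apply mul_le_mul_of_nonneg_left hCS ht₁pos.le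
        _ = t₁^2 * E := by ring
    have h2 : t₁^2 ≤ 4 * R^2 := by nlinarith [ht₁le, ht₁pos.le, hRpos.le]
    have h3 : D ≤ 4 * R^2 * E := h1.trans (by nlinarith [hE0])
    calc (K/4) * D ≤ (K/4) * (4 * R^2 * E) := by
          apply mul_le_mul_of_nonneg_left h3 (by positivity)
      _ = K * R^2 * E := by ring
      _ = K * (M / (8*K)) * E := by rw [hR2]
      _ = (M/8) * E := by field_simp
  have hfinal : ∫ t, Fm t ∂μ ≤ (qhLengthPunct γ₁ 0 t₁ + qhLengthPunct γ₂ 0 t₁) / 2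
      - (3*M/8) * E := by
    rw [← hGeq]
    linarith [hmono, hDfin]
  by_cases hE : E = 0
  · right
    have hz : (fun t => eps t ^ 2) =ᵐ[μ] 0 :=
      (integral_eq_zero_iff_of_nonneg_ae
        (by filter_upwards with t; exact sq_nonneg _) intEps2).1 hE
    have hεz : ∀ᵐ t ∂μ, deriv γ₁ t = deriv γ₂ t := by
      filter_upwards [hz] with t htz
      have h1 : eps t = 0 := by
        have := pow_eq_zero_iff (n := 2) (by norm_num) |>.1 htz
        exact this
      rw [hepsdef] at h1
      exact sub_eq_zero.1 (norm_eq_zero.1 h1)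
    intro t ht
    rcases eq_or_lt_of_le ht.1 with h0 | h0
    · rw [← h0]; exact hstart
    · have heq := hftc t h0 ht.2
      have hzero : ∫ s in (0:ℝ)..t, (deriv γ₁ s - deriv γ₂ s) = 0 := by
        rw [intervalIntegral.integral_of_le h0.le]
        have hae : ∀ᵐ s ∂(volume.restrict (Set.Ioc 0 t)),
            deriv γ₁ s - deriv γ₂ s = 0 := by
          filter_upwards [ae_restrict_of_ae_restrict_of_subset
            (Set.Ioc_subset_Ioc_right ht.2) hεz] with s hs
          rw [hs, sub_self]
        rw [MeasureTheory.integral_congr_ae hae]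
        simp
      rw [hzero] at heq
      exact sub_eq_zero.1 heq
  · left
    have hEpos : 0 < E := lt_of_le_of_ne hE0 (Ne.symm hE)
    rw [← hqm] at hfinal
    have : qhLengthPunct mid 0 t₁ <
        (qhLengthPunct γ₁ 0 t₁ + qhLengthPunct γ₂ 0 t₁) / 2 := by
      have : 0 < (3*M/8) * E := by positivity
      linarith
    exact this
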